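/- Let X, Y and Z_1, …, Z_n be finitely-valued random variables on a common probability space P. For each i ∈ {1, …, n}, define I_i^max as the supremum, over all values z of Z_{<i} = (Z_1, …, Z_{i−1}) with P(Z_{<i} = z) > 0, of the conditional mutual information I(Z_i; Y | X) computed under the conditional probability measure P(· | Z_{<i} = z). Then I(Z_{1:n}; Y | X) ≤ min( H(Y | X), ∑_{i=1}^n I_i^max ). -/

import Mathlib

open MeasureTheory ProbabilityTheory

/-- Shannon entropy (in nats) of a finitely-valued random variable `X` under `μ`. -/
noncomputable def entH {Ω : Type*} [MeasurableSpace Ω] (μ : Measure Ω)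
    {S : Type*} [Fintype S] (X : Ω → S) : ℝ :=
  ∑ s : S, Real.negMulLog ((μ (X ⁻¹' {s})).toReal)

/-- Conditional Shannon entropy `H(Y | X) = H(X, Y) - H(X)`. -/
noncomputable def condEntH {Ω : Type*} [MeasurableSpace Ω] (μ : Measure Ω)
    {S T : Type*} [Fintype S] [Fintype T] (Y : Ω → T) (X : Ω → S) : ℝ :=
  entH μ (fun ω => (X ω, Y ω)) - entH μ X

/-- Conditional mutual information `I(A; B | C) = H(A | C) - H(A | (B, C))`. -/
noncomputable def condMI {Ω : Type*} [MeasurableSpace Ω] (μ : Measure Ω)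
    {A B C : Type*} [Fintype A] [Fintype B] [Fintype C]
    (fA : Ω → A) (fB : Ω → B) (fC : Ω → C) : ℝ :=
  condEntH μ fA fC - condEntH μ fA (fun ω => (fB ω, fC ω))

section Aux
variable {Ω : Type*} [MeasurableSpace Ω] {μ : Measure Ω}

/-- entropy is invariant under injective relabeling of values -/
lemma entH_comp_inj {S T : Type*} [Fintype S] [Fintype T]
    {g : S → T} (hg : Function.Injective g) (X : Ω → S) (X' : Ω → T)
    (hgX : ∀ ω, X' ω = g (X ω)) :
    entH μ X' = entH μ X := by
  classical
  have hX' : X' = fun ω => g (X ω) := funext hgX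
  subst hX'
  unfold entH
  rw [← Finset.sum_subset (Finset.subset_univ (Finset.univ.image g))]
  · rw [Finset.sum_image (fun a _ b _ h => hg h)]
    refine Finset.sum_congr rfl fun s _ => ?_
    congr 1
    have : (fun ω => g (X ω)) ⁻¹' {g s} = X ⁻¹' {s} := by
      ext ω; simp [hg.eq_iff]
    rw [this]
  · intro t _ ht
    have : (fun ω => g (X ω)) ⁻¹' {t} = ∅ := by
      ext ω; simp only [Set.mem_preimage, Set.mem_singleton_iff, Set.mem_empty_iff_false,
        iff_false]
      intro h; exact ht (Finset.mem_image.2 ⟨X ω, Finset.mem_univ _, h⟩)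
    simp [this, Real.negMulLog_zero]

lemma condEntH_comp_inj {S T U : Type*} [Fintype S] [Fintype T] [Fintype U]
    {g : S → T} (hg : Function.Injective g) (A : Ω → U) (V : Ω → S) (V' : Ω → T)
    (hgV : ∀ ω, V' ω = g (V ω)) :
    condEntH μ A V' = condEntH μ A V := by
  classical
  unfold condEntH
  rw [entH_comp_inj hg V V' hgV,
    entH_comp_inj (g := fun p : S × U => (g p.1, p.2))
      (fun p q h => by
        have h1 := congrArg Prod.fst h; have h2 := congrArg Prod.snd h
        exact Prod.ext (hg h1) h2)
      (fun ω => (V ω, A ω)) (fun ω => (V' ω, A ω)) (fun ω => by simp [hgV ω])]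

/-- fibers sum to one for a probability measure -/
lemma sum_toReal_fibers {S : Type*} [Fintype S] [MeasurableSpace S] [MeasurableSingletonClass S]
    (ν : Measure Ω) [IsProbabilityMeasure ν] {V : Ω → S} (hV : Measurable V) :
    ∑ s : S, (ν (V ⁻¹' {s})).toReal = 1 := by
  have h := MeasureTheory.sum_measure_preimage_singleton (μ := ν) Finset.univ
    (fun s _ => hV (measurableSet_singleton s))
  have h2 : ∑ s : S, ν (V ⁻¹' {s}) = 1 := by
    simpa using h
  rw [← ENNReal.toReal_sum (fun s _ => measure_ne_top ν _), h2, ENNReal.toReal_one]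

/-- marginal decomposition -/
lemma measure_fiber_eq_sum {S T : Type*} [Fintype S] [Fintype T]
    [MeasurableSpace S] [MeasurableSpace T]
    [MeasurableSingletonClass S] [MeasurableSingletonClass T]
    {V : Ω → S} {W : Ω → T} (hV : Measurable V) (hW : Measurable W) (s : S) :
    μ (V ⁻¹' {s}) = ∑ t : T, μ ((fun ω => (V ω, W ω)) ⁻¹' {(s, t)}) := by
  classical
  have hmeas : ∀ t : T, MeasurableSet ((fun ω => (V ω, W ω)) ⁻¹' {(s, t)}) := fun t =>
    (hV.prodMk hW) (measurableSet_singleton _)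
  have h := MeasureTheory.sum_measure_preimage_singleton (μ := μ)
    ({s} ×ˢ (Finset.univ : Finset T)) (f := fun ω => (V ω, W ω))
    (fun p _ => (hV.prodMk hW) (measurableSet_singleton p))
  rw [Finset.sum_product, Finset.sum_singleton] at h
  rw [h]
  congr 1
  ext ω
  simp [eq_comm]

lemma condEntH_nonneg [IsProbabilityMeasure μ] {S T : Type*} [Fintype S] [Fintype T]
    [MeasurableSpace S] [MeasurableSpace T]
    [MeasurableSingletonClass S] [MeasurableSingletonClass T]
    {A : Ω → T} {V : Ω → S} (hA : Measurable A) (hV : Measurable V) :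
    0 ≤ condEntH μ A V := by
  unfold condEntH entH
  rw [sub_nonneg, Fintype.sum_prod_type]
  apply Finset.sum_le_sum
  intro s _
  -- ∑ t, negMulLog q(s,t) ≥ negMulLog (∑ t, q(s,t))
  set q : T → ℝ := fun t => (μ ((fun ω => (V ω, A ω)) ⁻¹' {(s, t)})).toReal with hq
  have hqnn : ∀ t, 0 ≤ q t := fun t => ENNReal.toReal_nonneg
  have hsum : (μ (V ⁻¹' {s})).toReal = ∑ t, q t := by
    rw [measure_fiber_eq_sum hV hA s, ENNReal.toReal_sum (fun t _ => measure_ne_top μ _)]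
  rw [hsum]
  -- negMulLog (∑ q) ≤ ∑ negMulLog q
  have hS : ∀ t, q t ≤ ∑ t', q t' := fun t =>
    Finset.single_le_sum (fun t' _ => hqnn t') (Finset.mem_univ t)
  calc Real.negMulLog (∑ t, q t) = ∑ t, -(q t * Real.log (∑ t', q t')) := by
        rw [Real.negMulLog, neg_mul, Finset.sum_mul, ← Finset.sum_neg_distrib]
      _ ≤ ∑ t, Real.negMulLog (q t) := by
        apply Finset.sum_le_sum
        intro t _
        rw [Real.negMulLog, neg_mul, neg_le_neg_iff]
        rcases eq_or_lt_of_le (hqnn t) with h0 | h0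
        · simp [← h0]
        · exact mul_le_mul_of_nonneg_left
            (Real.log_le_log h0 (hS t)) (hqnn t)

/-- symmetry of conditional mutual information (any measure) -/
lemma condMI_symm {A B C : Type*} [Fintype A] [Fintype B] [Fintype C]
    (fA : Ω → A) (fB : Ω → B) (fC : Ω → C) :
    condMI μ fA fB fC = condMI μ fB fA fC := by
  unfold condMI condEntH
  have e1 : entH μ (fun ω => ((fB ω, fC ω), fA ω))
      = entH μ (fun ω => ((fA ω, fC ω), fB ω)) :=
    entH_comp_inj
      (g := fun p : (A × C) × B => ((p.2, p.1.2), p.1.1))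
      (Equiv.injective ⟨fun p => ((p.2, p.1.2), p.1.1),
        fun p => ((p.2, p.1.2), p.1.1), fun p => rfl, fun p => rfl⟩)
      (fun ω => ((fA ω, fC ω), fB ω)) (fun ω => ((fB ω, fC ω), fA ω)) (fun ω => rfl)
  have e2 : entH μ (fun ω => (fC ω, fA ω)) = entH μ (fun ω => (fA ω, fC ω)) :=
    entH_comp_inj (g := fun p : A × C => (p.2, p.1))
      (Equiv.prodComm A C).injective
      (fun ω => (fA ω, fC ω)) (fun ω => (fC ω, fA ω)) (fun ω => rfl)
  have e3 : entH μ (fun ω => (fC ω, fB ω)) = entH μ (fun ω => (fB ω, fC ω)) :=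
    entH_comp_inj (g := fun p : B × C => (p.2, p.1))
      (Equiv.prodComm B C).injective
      (fun ω => (fB ω, fC ω)) (fun ω => (fC ω, fB ω)) (fun ω => rfl)
  linarith


/-- key fiber identity: μ(F ∩ W⁻¹{w}) in reals equals P(w) * μ_w(F) -/
lemma toReal_inter_fiber {T : Type*} [MeasurableSpace T] [MeasurableSingletonClass T]
    [IsFiniteMeasure μ] {W : Ω → T} (hW : Measurable W) (w : T) (F : Set Ω) :
    (μ (F ∩ W ⁻¹' {w})).toReal
      = (μ (W ⁻¹' {w})).toReal * ((μ[|W ⁻¹' {w}]) F).toReal := by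
  set E := W ⁻¹' {w} with hE
  have hEm : MeasurableSet E := hW (measurableSet_singleton w)
  by_cases h0 : μ E = 0
  · have : μ (F ∩ E) = 0 := measure_mono_null Set.inter_subset_right h0
    simp [this, h0]
  · rw [cond_apply hEm, Set.inter_comm E F, ENNReal.toReal_mul, ENNReal.toReal_inv,
      ← mul_assoc, mul_inv_cancel₀ (by
        simp [ENNReal.toReal_ne_zero, h0, measure_ne_top μ E]), one_mul]

/-- conditional decomposition of joint entropy -/
lemma entH_pair_cond [IsProbabilityMeasure μ] {S T : Type*} [Fintype S] [Fintype T]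
    [MeasurableSpace S] [MeasurableSpace T]
    [MeasurableSingletonClass S] [MeasurableSingletonClass T]
    {V : Ω → S} {W : Ω → T} (hV : Measurable V) (hW : Measurable W) :
    entH μ (fun ω => (V ω, W ω)) =
      ∑ w : T, (Real.negMulLog ((μ (W ⁻¹' {w})).toReal)
        + (μ (W ⁻¹' {w})).toReal * entH (μ[|W ⁻¹' {w}]) V) := by
  classical
  unfold entH
  rw [Fintype.sum_prod_type, Finset.sum_comm]
  refine Finset.sum_congr rfl fun w _ => ?_
  set E := W ⁻¹' {w} with hE
  have hfib : ∀ s : S, (fun ω => (V ω, W ω)) ⁻¹' {(s, w)} = V ⁻¹' {s} ∩ E := by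
    intro s; ext ω; simp [hE, Prod.ext_iff]
  by_cases h0 : μ E = 0
  · have hz : ∀ s : S, (μ ((fun ω => (V ω, W ω)) ⁻¹' {(s, w)})).toReal = 0 := by
      intro s
      rw [hfib s]
      simp [measure_mono_null Set.inter_subset_right h0]
    simp [hz, h0, Real.negMulLog_zero]
  · have : IsProbabilityMeasure (μ[|E]) :=
      cond_isProbabilityMeasure h0
    have hcondV : ∑ s : S, ((μ[|E]) (V ⁻¹' {s})).toReal = 1 :=
      sum_toReal_fibers (μ[|E]) hV
    have hterm : ∀ s : S, (μ ((fun ω => (V ω, W ω)) ⁻¹' {(s, w)})).toReal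
        = (μ E).toReal * ((μ[|E]) (V ⁻¹' {s})).toReal := by
      intro s; rw [hfib s, toReal_inter_fiber hW w]
    calc ∑ s : S, Real.negMulLog ((μ ((fun ω => (V ω, W ω)) ⁻¹' {(s, w)})).toReal)
        = ∑ s : S, (((μ[|E]) (V ⁻¹' {s})).toReal * Real.negMulLog ((μ E).toReal)
            + (μ E).toReal * Real.negMulLog (((μ[|E]) (V ⁻¹' {s})).toReal)) := by
          refine Finset.sum_congr rfl fun s _ => ?_
          rw [hterm s, Real.negMulLog_mul]
      _ = Real.negMulLog ((μ E).toReal)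
            + (μ E).toReal * ∑ s : S, Real.negMulLog (((μ[|E]) (V ⁻¹' {s})).toReal) := by
          rw [Finset.sum_add_distrib, ← Finset.sum_mul, hcondV, one_mul, Finset.mul_sum]

/-- conditional entropy decomposition over the fibers of W -/
lemma condEntH_cond_decomp [IsProbabilityMeasure μ]
    {S T U : Type*} [Fintype S] [Fintype T] [Fintype U]
    [MeasurableSpace S] [MeasurableSpace T] [MeasurableSpace U]
    [MeasurableSingletonClass S] [MeasurableSingletonClass T] [MeasurableSingletonClass U]
    {A : Ω → U} {C : Ω → S} {W : Ω → T}
    (hA : Measurable A) (hC : Measurable C) (hW : Measurable W) :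
    condEntH μ A (fun ω => (C ω, W ω))
      = ∑ w : T, (μ (W ⁻¹' {w})).toReal * condEntH (μ[|W ⁻¹' {w}]) A C := by
  unfold condEntH
  have h1 : entH μ (fun ω => ((fun ω' => (C ω', W ω')) ω, A ω))
      = entH μ (fun ω => ((C ω, A ω), W ω)) :=
    entH_comp_inj (g := fun p : (S × U) × T => ((p.1.1, p.2), p.1.2))
      (Equiv.injective ⟨fun p => ((p.1.1, p.2), p.1.2), fun p => ((p.1.1, p.2), p.1.2),
        fun p => rfl, fun p => rfl⟩)
      (fun ω => ((C ω, A ω), W ω)) (fun ω => ((C ω, W ω), A ω)) (fun ω => rfl)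
  rw [h1, entH_pair_cond (hC.prodMk hA) hW, entH_pair_cond hC hW,
    ← Finset.sum_sub_distrib]
  refine Finset.sum_congr rfl fun w _ => ?_
  ring

end Aux

/-- **Sequential pipeline upper bound.**
With `I_i^max` the supremum over positive-probability histories `z` of `Z_{<i}` of
`I(Z i; Y | X)` computed under the conditional measure `μ[| Z_{<i} = z]`, any sequential MAS
satisfies `I(Z_{1:n}; Y | X) ≤ min (H(Y | X)) (∑ i, I_i^max)`. -/
theorem sequential_pipeline_upper_bound
    {Ω : Type*} [MeasurableSpace Ω] (μ : Measure Ω) [IsProbabilityMeasure μ]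
    {𝓧 𝓨 : Type*} [Fintype 𝓧] [Nonempty 𝓧] [Fintype 𝓨] [Nonempty 𝓨]
    [MeasurableSpace 𝓧] [DiscreteMeasurableSpace 𝓧]
    [MeasurableSpace 𝓨] [DiscreteMeasurableSpace 𝓨]
    {n : ℕ} {𝓩 : Fin n → Type*} [∀ i, Fintype (𝓩 i)] [∀ i, Nonempty (𝓩 i)]
    [∀ i, MeasurableSpace (𝓩 i)] [∀ i, DiscreteMeasurableSpace (𝓩 i)]
    (X : Ω → 𝓧) (Y : Ω → 𝓨) (Z : ∀ i, Ω → 𝓩 i)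
    (hX : Measurable X) (hY : Measurable Y) (hZ : ∀ i, Measurable (Z i))
    (Imax : Fin n → ℝ)
    (hImax : ∀ i : Fin n, Imax i = sSup {r : ℝ |
        ∃ z : (∀ j : Fin i.val, 𝓩 (Fin.castLE i.isLt.le j)),
          μ ((fun ω (j : Fin i.val) => Z (Fin.castLE i.isLt.le j) ω) ⁻¹' {z}) ≠ 0 ∧
          r = condMI (μ[|(fun ω (j : Fin i.val) => Z (Fin.castLE i.isLt.le j) ω) ⁻¹' {z}])
                (Z i) Y X}) :
    condMI μ (fun ω (i : Fin n) => Z i ω) Y X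
      ≤ min (condEntH μ Y X) (∑ i : Fin n, Imax i) := by
  classical
  set G : ℕ → ℝ := fun k =>
    if h : k ≤ n then
      condEntH μ Y (fun ω => (X ω, fun j : Fin k => Z (Fin.castLE h j) ω))
    else 0 with hGdef
  -- G 0 is H(Y|X)
  have hG0 : G 0 = condEntH μ Y X := by
    simp only [hGdef, dif_pos (Nat.zero_le n)]
    exact condEntH_comp_inj
      (g := fun x : 𝓧 => ((x, fun j : Fin 0 => j.elim0) :
        𝓧 × (∀ j : Fin 0, 𝓩 (Fin.castLE (Nat.zero_le n) j))))
      (fun a b h => congrArg Prod.fst h) Y X _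
      (fun ω => Prod.ext rfl (Subsingleton.elim _ _))
  -- G n is H(Y | Z, X)
  have hGn : condEntH μ Y (fun ω => ((fun i : Fin n => Z i ω), X ω)) = G n := by
    simp only [hGdef, dif_pos (le_refl n)]
    exact (condEntH_comp_inj
      (g := fun p : (∀ i : Fin n, 𝓩 i) × 𝓧 =>
        ((p.2, fun j : Fin n => p.1 (Fin.castLE (le_refl n) j)) :
          𝓧 × (∀ j : Fin n, 𝓩 (Fin.castLE (le_refl n) j))))
      (by
        rintro ⟨f, x⟩ ⟨f', x'⟩ h
        simp only [Prod.mk.injEq] at h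
        exact Prod.ext (funext fun i => congrFun h.2 i) h.1)
      Y (fun ω => ((fun i : Fin n => Z i ω), X ω))
      (fun ω => (X ω, fun j : Fin n => Z (Fin.castLE (le_refl n) j) ω))
      (fun ω => rfl)).symm
  have hGnN : 0 ≤ G n := by
    rw [← hGn]
    exact condEntH_nonneg hY ((measurable_pi_lambda _ fun i => hZ i).prodMk hX)
  have key : condMI μ (fun ω (i : Fin n) => Z i ω) Y X = G 0 - G n := by
    have h1 : condMI μ (fun ω (i : Fin n) => Z i ω) Y X
        = condEntH μ Y X - condEntH μ Y (fun ω => ((fun i : Fin n => Z i ω), X ω)) :=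
      condMI_symm (fun ω (i : Fin n) => Z i ω) Y X
    rw [h1, hG0, hGn]
  -- per-step identity
  have hterm : ∀ i : Fin n, G i.val - G (i.val + 1)
      = ∑ w : (∀ j : Fin i.val, 𝓩 (Fin.castLE i.isLt.le j)),
          (μ ((fun ω (j : Fin i.val) => Z (Fin.castLE i.isLt.le j) ω) ⁻¹' {w})).toReal *
            condMI (μ[|(fun ω (j : Fin i.val) => Z (Fin.castLE i.isLt.le j) ω) ⁻¹' {w}])
              (Z i) Y X := by
    intro i
    have hWim : Measurable (fun ω (j : Fin i.val) => Z (Fin.castLE i.isLt.le j) ω) :=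
      measurable_pi_lambda _ fun j => hZ _
    have hGk : G i.val
        = ∑ w : (∀ j : Fin i.val, 𝓩 (Fin.castLE i.isLt.le j)),
            (μ ((fun ω (j : Fin i.val) => Z (Fin.castLE i.isLt.le j) ω) ⁻¹' {w})).toReal *
              condEntH (μ[|(fun ω (j : Fin i.val) => Z (Fin.castLE i.isLt.le j) ω) ⁻¹' {w}])
                Y X := by
      simp only [hGdef, dif_pos i.isLt.le]
      exact condEntH_cond_decomp hY hX hWim
    have hsplit : G (i.val + 1)
        = condEntH μ Y (fun ω => ((Z i ω, X ω),
            fun j : Fin i.val => Z (Fin.castLE i.isLt.le j) ω)) := by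
      have hn1 : i.val + 1 ≤ n := i.isLt
      have hd : G (i.val + 1) = condEntH μ Y
          (fun ω => (X ω, fun j : Fin (i.val + 1) => Z (Fin.castLE hn1 j) ω)) := by
        simp only [hGdef]
        rw [dif_pos hn1]
      rw [hd]
      exact (condEntH_comp_inj
        (g := fun p : 𝓧 × (∀ j : Fin (i.val + 1), 𝓩 (Fin.castLE (i.isLt : i.val + 1 ≤ n) j)) =>
          ((((p.2 (Fin.last i.val) : 𝓩 i), p.1), fun j : Fin i.val => p.2 j.castSucc) :
            (𝓩 i × 𝓧) × (∀ j : Fin i.val, 𝓩 (Fin.castLE i.isLt.le j))))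
        (by
          rintro ⟨x, f⟩ ⟨x', f'⟩ h
          simp only [Prod.mk.injEq] at h
          refine Prod.ext h.1.2 (funext fun j => ?_)
          induction j using Fin.lastCases with
          | last => exact h.1.1
          | cast j => exact congrFun h.2 j)
        Y
        (fun ω => (X ω, fun j : Fin (i.val + 1) => Z (Fin.castLE (i.isLt : i.val + 1 ≤ n) j) ω))
        (fun ω => ((Z i ω, X ω), fun j : Fin i.val => Z (Fin.castLE i.isLt.le j) ω))
        (fun ω => rfl)).symm
    have hGk1 : G (i.val + 1)
        = ∑ w : (∀ j : Fin i.val, 𝓩 (Fin.castLE i.isLt.le j)),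
            (μ ((fun ω (j : Fin i.val) => Z (Fin.castLE i.isLt.le j) ω) ⁻¹' {w})).toReal *
              condEntH (μ[|(fun ω (j : Fin i.val) => Z (Fin.castLE i.isLt.le j) ω) ⁻¹' {w}])
                Y (fun ω => (Z i ω, X ω)) :=
      hsplit.trans (condEntH_cond_decomp hY ((hZ i).prodMk hX) hWim)
    rw [hGk, hGk1, ← Finset.sum_sub_distrib]
    refine Finset.sum_congr rfl fun w _ => ?_
    rw [← mul_sub]
    congr 1
    rw [condMI_symm (Z i) Y X]
    rfl
  -- per-step bound
  have hbound : ∀ i : Fin n, G i.val - G (i.val + 1) ≤ Imax i := by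
    intro i
    rw [hterm i, hImax i]
    have hWim : Measurable (fun ω (j : Fin i.val) => Z (Fin.castLE i.isLt.le j) ω) :=
      measurable_pi_lambda _ fun j => hZ _
    have hbdd : BddAbove {r : ℝ |
        ∃ z : (∀ j : Fin i.val, 𝓩 (Fin.castLE i.isLt.le j)),
          μ ((fun ω (j : Fin i.val) => Z (Fin.castLE i.isLt.le j) ω) ⁻¹' {z}) ≠ 0 ∧
          r = condMI (μ[|(fun ω (j : Fin i.val) => Z (Fin.castLE i.isLt.le j) ω) ⁻¹' {z}])
                (Z i) Y X} := by
      refine Set.Finite.bddAbove (Set.Finite.subset (Set.finite_range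
        (fun z : (∀ j : Fin i.val, 𝓩 (Fin.castLE i.isLt.le j)) =>
          condMI (μ[|(fun ω (j : Fin i.val) => Z (Fin.castLE i.isLt.le j) ω) ⁻¹' {z}])
            (Z i) Y X)) ?_)
      rintro r ⟨z, _, rfl⟩
      exact ⟨z, rfl⟩
    calc ∑ w : (∀ j : Fin i.val, 𝓩 (Fin.castLE i.isLt.le j)),
          (μ ((fun ω (j : Fin i.val) => Z (Fin.castLE i.isLt.le j) ω) ⁻¹' {w})).toReal *
            condMI (μ[|(fun ω (j : Fin i.val) => Z (Fin.castLE i.isLt.le j) ω) ⁻¹' {w}])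
              (Z i) Y X
        ≤ ∑ w : (∀ j : Fin i.val, 𝓩 (Fin.castLE i.isLt.le j)),
            (μ ((fun ω (j : Fin i.val) => Z (Fin.castLE i.isLt.le j) ω) ⁻¹' {w})).toReal *
              sSup {r : ℝ |
                ∃ z : (∀ j : Fin i.val, 𝓩 (Fin.castLE i.isLt.le j)),
                  μ ((fun ω (j : Fin i.val) => Z (Fin.castLE i.isLt.le j) ω) ⁻¹' {z}) ≠ 0 ∧
                  r = condMI
                    (μ[|(fun ω (j : Fin i.val) => Z (Fin.castLE i.isLt.le j) ω) ⁻¹' {z}])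
                    (Z i) Y X} := by
          refine Finset.sum_le_sum fun w _ => ?_
          by_cases h0 : μ ((fun ω (j : Fin i.val) => Z (Fin.castLE i.isLt.le j) ω) ⁻¹' {w}) = 0
          · simp [h0]
          · exact mul_le_mul_of_nonneg_left (le_csSup hbdd ⟨w, h0, rfl⟩) ENNReal.toReal_nonneg
      _ = _ := by
          rw [← Finset.sum_mul, sum_toReal_fibers μ hWim, one_mul]
  -- telescoping
  have htel : G 0 - G n = ∑ i : Fin n, (G i.val - G (i.val + 1)) := by
    rw [Fin.sum_univ_eq_sum_range (fun k => G k - G (k + 1)) n,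
      Finset.sum_range_sub' G n]
  refine le_min ?_ ?_
  · rw [key, hG0]
    linarith
  · rw [key, htel]
    exact Finset.sum_le_sum fun i _ => hbound i
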